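/- Let X be a set and let A be a unital *-subalgebra of B(ℓ²(X)). If a family 𝒰 of subsets of X is 𝓕-bounded for some finite *-symmetric subset 𝓕 of the norm closure of A, then 𝒰 is 𝓖-bounded for some finite *-symmetric subset 𝓖 of A. Consequently, A and its norm closure induce the same large scale structure on X. -/

import Mathlib

noncomputable abbrev l2 (X : Type*) : Type _ := lp (fun _ : X => ℂ) 2

/-- The standard basis vector `δ_x` of `ℓ²(X)`. -/
noncomputable def delta {X : Type*} (x : X) : l2 X :=
  haveI := Classical.decEq X
  lp.single 2 x (1 : ℂ)

/-- The matrix coefficient `⟨a δ_x, δ_y⟩`. -/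
noncomputable def entry {X : Type*} (a : l2 X →L[ℂ] l2 X) (x y : X) : ℂ :=
  inner ℂ (a (delta x)) (delta y)

/-- A family of operators is `*`-symmetric if it is closed under adjoints. -/
def StarSymmetric {X : Type*} (𝓕 : Set (l2 X →L[ℂ] l2 X)) : Prop :=
  ∀ a ∈ 𝓕, star a ∈ 𝓕

/-- A family `𝒰` of subsets of `X` is `𝓕`-bounded. -/
def FBounded {X : Type*} (𝓕 : Set (l2 X →L[ℂ] l2 X)) (𝒰 : Set (Set X)) : Prop :=
  ∃ n : ℕ, 1 ≤ n ∧ ∀ U ∈ 𝒰, ∀ x ∈ U, ∀ y ∈ U, x ≠ y →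
    ∃ c : ℕ → X, c 1 = x ∧ c n = y ∧ (∀ i : ℕ, 1 ≤ i → i ≤ n → c i ∈ U) ∧
      ∀ i : ℕ, 1 ≤ i → i < n →
        c i = c (i + 1) ∨ ∃ a ∈ 𝓕, 1 ≤ ‖entry a (c i) (c (i + 1))‖

lemma norm_delta {X : Type*} (x : X) : ‖delta x‖ = 1 := by
  classical
  have := lp.norm_single (p := (2:ENNReal)) (E := fun _ : X => ℂ) (by norm_num)
    x (1:ℂ)
  simpa [delta] using this

lemma entry_sub {X : Type*} (a b : l2 X →L[ℂ] l2 X) (x y : X) :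
    entry a x y - entry b x y = entry (a - b) x y := by
  simp [entry, inner_sub_left]

lemma norm_entry_le {X : Type*} (a : l2 X →L[ℂ] l2 X) (x y : X) :
    ‖entry a x y‖ ≤ ‖a‖ := by
  calc ‖entry a x y‖ ≤ ‖a (delta x)‖ * ‖delta y‖ := norm_inner_le_norm _ _
    _ ≤ (‖a‖ * ‖delta x‖) * ‖delta y‖ := by gcongr; exact a.le_opNorm _
    _ = ‖a‖ := by rw [norm_delta, norm_delta]; ring

lemma entry_smul {X : Type*} (c : ℂ) (a : l2 X →L[ℂ] l2 X) (x y : X) :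
    entry (c • a) x y = (starRingEnd ℂ c) * entry a x y := by
  simp [entry, inner_smul_left, mul_comm]

lemma key {X : Type*} (A : StarSubalgebra ℂ (l2 X →L[ℂ] l2 X))
    {𝓕 : Set (l2 X →L[ℂ] l2 X)} (hfin : 𝓕.Finite)
    (hsub : 𝓕 ⊆ closure (A : Set (l2 X →L[ℂ] l2 X)))
    {𝒰 : Set (Set X)} (hb : FBounded 𝓕 𝒰) :
    ∃ 𝓖 : Set (l2 X →L[ℂ] l2 X), 𝓖.Finite ∧
      𝓖 ⊆ (A : Set (l2 X →L[ℂ] l2 X)) ∧ StarSymmetric 𝓖 ∧ FBounded 𝓖 𝒰 := by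
  classical
  have hch : ∀ a ∈ 𝓕, ∃ b, b ∈ (A : Set (l2 X →L[ℂ] l2 X)) ∧ ‖a - b‖ < 1/2 := by
    intro a ha
    obtain ⟨b, hbA, hbd⟩ := Metric.mem_closure_iff.mp (hsub ha) (1/2) (by norm_num)
    exact ⟨b, hbA, by rwa [dist_eq_norm] at hbd⟩
  choose! f hfA hfd using hch
  set G0 : Set (l2 X →L[ℂ] l2 X) := (fun a => (2:ℂ) • f a) '' 𝓕 with hG0
  refine ⟨G0 ∪ star '' G0, (hfin.image _).union ((hfin.image _).image _), ?_, ?_, ?_⟩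
  · rintro g (⟨a, ha, rfl⟩ | ⟨h, ⟨a, ha, rfl⟩, rfl⟩)
    · exact A.smul_mem (hfA a ha) _
    · exact star_mem (A.smul_mem (hfA a ha) _)
  · rintro g (hg | ⟨h, hh, rfl⟩)
    · exact Or.inr ⟨g, hg, rfl⟩
    · exact Or.inl (by simpa [star_star] using hh)
  · obtain ⟨n, hn, H⟩ := hb
    refine ⟨n, hn, fun U hU x hx y hy hxy => ?_⟩
    obtain ⟨c, h1, h2, h3, h4⟩ := H U hU x hx y hy hxy
    refine ⟨c, h1, h2, h3, fun i hi1 hi2 => ?_⟩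
    rcases h4 i hi1 hi2 with h | ⟨a, ha, hge⟩
    · exact Or.inl h
    · refine Or.inr ⟨(2:ℂ) • f a, Or.inl ⟨a, ha, rfl⟩, ?_⟩
      have h5 : ‖entry a (c i) (c (i+1)) - entry (f a) (c i) (c (i+1))‖ ≤ ‖a - f a‖ := by
        rw [entry_sub]; exact norm_entry_le _ _ _
      have h6 : ‖entry a (c i) (c (i+1))‖ - ‖entry (f a) (c i) (c (i+1))‖ ≤
          ‖entry a (c i) (c (i+1)) - entry (f a) (c i) (c (i+1))‖ := norm_sub_norm_le _ _
      have h7 : ‖entry ((2:ℂ) • f a) (c i) (c (i+1))‖ =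
          2 * ‖entry (f a) (c i) (c (i+1))‖ := by
        rw [entry_smul, norm_mul]
        norm_num
      have := hfd a ha
      rw [h7]
      linarith

theorem stmt_15 {X : Type*} (A : StarSubalgebra ℂ (l2 X →L[ℂ] l2 X))
    (𝒰 : Set (Set X)) :
    ((∃ 𝓕 : Set (l2 X →L[ℂ] l2 X), 𝓕.Finite ∧
        𝓕 ⊆ closure (A : Set (l2 X →L[ℂ] l2 X)) ∧ StarSymmetric 𝓕 ∧
        FBounded 𝓕 𝒰) →
      ∃ 𝓖 : Set (l2 X →L[ℂ] l2 X), 𝓖.Finite ∧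
        𝓖 ⊆ (A : Set (l2 X →L[ℂ] l2 X)) ∧ StarSymmetric 𝓖 ∧ FBounded 𝓖 𝒰) ∧
    {𝒱 : Set (Set X) | ∃ 𝓕 : Set (l2 X →L[ℂ] l2 X), 𝓕.Finite ∧
        𝓕 ⊆ (A : Set (l2 X →L[ℂ] l2 X)) ∧ StarSymmetric 𝓕 ∧ FBounded 𝓕 𝒱} =
    {𝒱 : Set (Set X) | ∃ 𝓕 : Set (l2 X →L[ℂ] l2 X), 𝓕.Finite ∧
        𝓕 ⊆ closure (A : Set (l2 X →L[ℂ] l2 X)) ∧ StarSymmetric 𝓕 ∧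
        FBounded 𝓕 𝒱} := by
  constructor
  · rintro ⟨𝓕, hfin, hsub, _, hb⟩
    exact key A hfin hsub hb
  · ext 𝒱
    constructor
    · rintro ⟨𝓕, hfin, hsub, hsym, hb⟩
      exact ⟨𝓕, hfin, hsub.trans subset_closure, hsym, hb⟩
    · rintro ⟨𝓕, hfin, hsub, _, hb⟩
      exact key A hfin hsub hb
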